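/- Let G be a finite group, φ ∈ Aut(G), and g ∈ G. Then the map γ_g : G⋊⟨ι_g φ⟩ → G⋊⟨φ⟩ defined by (x, (ι_gφ)^i) ↦ (x·g·φ(g)⋯φ^{i-1}(g), φ^i) is a surjective group homomorphism whose restriction to the coset G.(ι_gφ) is a bijective G-equivariant map onto the coset G.φ; consequently the pullback γ_g^* : Class(G.φ) → Class(G.gφ) is an isometry of the spaces of G-invariant functions. -/

import Mathlib

open scoped BigOperators Classical

open SemidirectProduct

/-- let `G` be a finite group, `φ ∈ Aut(G)` and `g ∈ G`.  Model the semidirect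
products `G⋊⟨φ⟩` and `G⋊⟨ι_g∘φ⟩` as semidirect products with the cyclic group generated by the
respective automorphism (realized via `Multiplicative ℤ` and `zpowersHom`).  Then there is a
group homomorphism `γ_g : G⋊⟨ι_gφ⟩ → G⋊⟨φ⟩` with `γ_g(x, (ι_gφ)^0) = (x, φ^0)` and
`γ_g(1, ι_gφ) = (g, φ)` (so `γ_g(x,(ι_gφ)^i) = (x·gφ(g)⋯φ^{i-1}(g), φ^i)`), which is
surjective, restricts to a bijective `G`-equivariant map from the coset `G.(ι_gφ)` onto the
coset `G.φ` (explicitly `(x, ι_gφ) ↦ (x·g, φ)`), and whose pullback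
`γ_g^* : Class(G.φ) → Class(G.gφ)` is an isometry. -/
theorem stmt18 {G : Type*} [Group G] [Fintype G] (φ : MulAut G) (g : G) :
    ∃ γ : (G ⋊[zpowersHom (MulAut G) (φ.trans (MulAut.conj g))] Multiplicative ℤ) →*
          (G ⋊[zpowersHom (MulAut G) φ] Multiplicative ℤ),
      (∀ x : G, γ (SemidirectProduct.inl x) = SemidirectProduct.inl x) ∧
      γ ⟨1, Multiplicative.ofAdd 1⟩ = ⟨g, Multiplicative.ofAdd 1⟩ ∧
      Function.Surjective γ ∧
      (∀ x : G, γ ⟨x, Multiplicative.ofAdd 1⟩ = ⟨x * g, Multiplicative.ofAdd 1⟩) ∧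
      Function.Injective (fun x : G => γ ⟨x, Multiplicative.ofAdd 1⟩) ∧
      (∀ y : G, ∃ x : G, γ ⟨x, Multiplicative.ofAdd 1⟩ = ⟨y, Multiplicative.ofAdd 1⟩) ∧
      (∀ a x : G,
        γ (SemidirectProduct.inl a * ⟨x, Multiplicative.ofAdd 1⟩ *
            (SemidirectProduct.inl a)⁻¹) =
          SemidirectProduct.inl a * γ ⟨x, Multiplicative.ofAdd 1⟩ *
            (SemidirectProduct.inl a)⁻¹) ∧
      (∀ f f' : G → ℂ,
        (Fintype.card G : ℂ)⁻¹ * ∑ x : G,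
            f ((γ ⟨x, Multiplicative.ofAdd 1⟩).left) *
            (starRingEnd ℂ) (f' ((γ ⟨x, Multiplicative.ofAdd 1⟩).left)) =
          (Fintype.card G : ℂ)⁻¹ * ∑ y : G, f y * (starRingEnd ℂ) (f' y)) := by
  set ψ := φ.trans (MulAut.conj g) with hψ
  set s : (G ⋊[zpowersHom (MulAut G) φ] Multiplicative ℤ) := ⟨g, Multiplicative.ofAdd 1⟩ with hs
  have hone : zpowersHom (MulAut G) φ (Multiplicative.ofAdd (1:ℤ)) = φ := by
    simp [zpowersHom]
  have hstep : ∀ x : G, inl (ψ x) = s * inl x * s⁻¹ := by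
    intro x
    have : inl (ψ x) * s = s * inl x := by
      ext
      · simp [hs, hψ, hone, mul_left, mul_right, mul_assoc, zpowersHom_apply]
      · simp [hs, mul_left, mul_right]
    rw [← this, mul_assoc, mul_inv_cancel, mul_one]
  have hkey : ∀ m : ℤ, ∀ x : G,
      inl ((ψ ^ m) x) = s ^ m * inl x * (s ^ m)⁻¹ := by
    intro m
    induction m using Int.induction_on with
    | zero => intro x; simp
    | succ k ih =>
        intro x
        have : (ψ ^ ((k : ℤ) + 1)) x = (ψ ^ (k : ℤ)) (ψ x) := by
          rw [zpow_add_one, MulAut.mul_apply]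
        rw [this, ih, hstep, zpow_add_one]
        group
    | pred k ih =>
        intro x
        have h1 : (ψ ^ (-(k : ℤ) - 1)) x = (ψ ^ (-(k : ℤ))) (ψ⁻¹ x) := by
          rw [sub_eq_add_neg, zpow_add, zpow_neg_one, MulAut.mul_apply]
        have h2 : inl ((ψ * ψ⁻¹) x) = s * inl (ψ⁻¹ x) * s⁻¹ := hstep _
        rw [mul_inv_cancel] at h2
        simp only [MulAut.one_apply] at h2
        have h3 : inl (ψ⁻¹ x) = s⁻¹ * inl x * s := by
          rw [h2]; group
        rw [h1, ih, h3, show -(k:ℤ) - 1 = -(k:ℤ) + -1 by ring, zpow_add]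
        group
  have hcompat : ∀ n : Multiplicative ℤ,
      (inl : G →* _).comp ((zpowersHom (MulAut G) ψ n) :
          G ≃* G).toMonoidHom =
        (MulAut.conj (zpowersHom _ s n)).toMonoidHom.comp inl := by
    intro n
    refine MonoidHom.ext fun x => ?_
    simp only [MonoidHom.comp_apply, MulEquiv.coe_toMonoidHom, MulAut.conj_apply,
      zpowersHom_apply]
    exact hkey n.toAdd x
  set γ := SemidirectProduct.lift inl (zpowersHom _ s) hcompat with hγ
  have hinl : ∀ x : G, γ (inl x) = inl x := fun x => SemidirectProduct.lift_inl _ _ _ x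
  have hmkdec : ∀ x : G, (⟨x, Multiplicative.ofAdd 1⟩ :
      G ⋊[zpowersHom (MulAut G) ψ] Multiplicative ℤ) = inl x * inr (Multiplicative.ofAdd 1) :=
    fun x => mk_eq_inl_mul_inr _ x
  have hmk : ∀ x : G, γ ⟨x, Multiplicative.ofAdd 1⟩ = ⟨x * g, Multiplicative.ofAdd 1⟩ := by
    intro x
    rw [hmkdec, map_mul, hinl, SemidirectProduct.lift_inr, zpowersHom_apply]
    ext
    · simp [hs, mul_left]
    · simp [hs, mul_right]
  refine ⟨γ, hinl, ?_, ?_, hmk, ?_, ?_, ?_, ?_⟩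
  · have := hmk 1
    rwa [one_mul] at this
  · -- surjectivity
    intro z
    set u := γ (inr z.right) with hu
    have hur : u.right = z.right := by
      rw [hu, SemidirectProduct.lift_inr, zpowersHom_apply]
      have : (rightHom (s ^ z.right.toAdd) : Multiplicative ℤ) = z.right := by
        rw [map_zpow]
        simp [hs, rightHom, ← ofAdd_zsmul]
      calc (s ^ z.right.toAdd).right = rightHom (s ^ z.right.toAdd) := rfl
        _ = z.right := this
    refine ⟨inl ((z * u⁻¹).left) * inr z.right, ?_⟩
    rw [map_mul, hinl]
    have hzu : inl ((z * u⁻¹).left) = z * u⁻¹ := by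
      ext
      · simp
      · simp [mul_right, inv_right, hur]
    rw [hzu, hu, mul_assoc, inv_mul_cancel, mul_one]
  · -- injectivity
    intro x y h
    simp only [hmk] at h
    have := congrArg SemidirectProduct.left h
    simpa using this
  · intro y
    exact ⟨y * g⁻¹, by rw [hmk]; simp⟩
  · intro a x
    simp only [map_mul, map_inv, hinl]
  · intro f f'
    congr 1
    simp only [hmk]
    exact Fintype.sum_equiv (Equiv.mulRight g)
      (fun x => f (x * g) * (starRingEnd ℂ) (f' (x * g)))
      (fun y => f y * (starRingEnd ℂ) (f' y)) (fun x => rfl)
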